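/- arXiv:0904.0068 — 2 statements merged into one kernel-verified Lean document; each statement's English description precedes it below -/
import Mathlib

section
/- Let A be an m×n real matrix, ξ ∈ [0,1), σ ≥ 0, θ ≥ 1, and suppose A satisfies VSḠ_s(ξ,σ,θ) with certificate Y. Then the pair (Y, v = 0) satisfies the defining inequalities of VSG_s(ξ,θ,0,σ), i.e., writing C_i for the i-th column of I_n − YᵀA: Φ_s(−C_i) ≤ ξ for all i; Φ_s(C_i) ≤ ξ for all i ∈ P_n; Φ_s(C_i) ≤ θξ for all i ∈ P_+; and ‖y_i‖_* ≤ σ for all i. In particular, if ξ < 1, A is s-semigood. -/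
open Finset

noncomputable def normS1 {n : ℕ} (s : ℕ) (x : Fin n → ℝ) : ℝ :=
  (Finset.univ.powerset.filter (fun J : Finset (Fin n) => J.card ≤ s)).sup'
    ⟨∅, by simp⟩ (fun J => ∑ i ∈ J, |x i|)

noncomputable def dualNorm {m : ℕ} (N : (Fin m → ℝ) → ℝ) (v : Fin m → ℝ) : ℝ :=
  sSup {r : ℝ | ∃ x : Fin m → ℝ, N x ≤ 1 ∧ r = ∑ k, v k * x k}

def IsNorm {m : ℕ} (N : (Fin m → ℝ) → ℝ) : Prop :=
  (∀ x y, N (x + y) ≤ N x + N y) ∧ (∀ (c : ℝ) (x), N (c • x) = |c| * N x) ∧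
  (∀ x, N x = 0 → x = 0)

def SemiGood {m n : ℕ} (A : Matrix (Fin m) (Fin n) ℝ) (Pplus : Finset (Fin n)) (s : ℕ) : Prop :=
  ∀ w : Fin n → ℝ,
    (Finset.univ.filter (fun i => w i ≠ 0)).card ≤ s →
    (∀ i ∈ Pplus, 0 ≤ w i) →
    ∀ z : Fin n → ℝ, A.mulVec z = A.mulVec w → (∀ i ∈ Pplus, 0 ≤ z i) →
      (∑ i, |z i|) ≤ (∑ i, |w i|) → z = w

def SGCond {m n : ℕ} (A : Matrix (Fin m) (Fin n) ℝ) (Pplus : Finset (Fin n))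
    (s : ℕ) (ξ θ : ℝ) : Prop :=
  ∀ x : Fin n → ℝ, A.mulVec x = 0 → ∀ J : Finset (Fin n), J.card ≤ s →
    ∑ i ∈ J ∩ Pplus, x i + ∑ i ∈ J ∩ Pplusᶜ, |x i| ≤
      ξ * (∑ i ∈ Pplusᶜ \ J, |x i| + ∑ i ∈ Pplus \ J, max (-x i) (θ * x i))

def SGbCond {m n : ℕ} (A : Matrix (Fin m) (Fin n) ℝ) (Pplus : Finset (Fin n))
    (s : ℕ) (ξ θ β : ℝ) (N : (Fin m → ℝ) → ℝ) : Prop :=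
  ∀ x : Fin n → ℝ, ∀ J : Finset (Fin n), J.card ≤ s →
    ∑ i ∈ J ∩ Pplus, x i + ∑ i ∈ J ∩ Pplusᶜ, |x i| ≤
      β * N (A.mulVec x) +
        ξ * (∑ i ∈ Pplusᶜ \ J, |x i| + ∑ i ∈ Pplus \ J, max (-x i) (θ * x i))

def SGbCondSign {m n : ℕ} (A : Matrix (Fin m) (Fin n) ℝ) (Pplus : Finset (Fin n))
    (s : ℕ) (ξ β : ℝ) (N : (Fin m → ℝ) → ℝ) : Prop :=
  ∀ J : Finset (Fin n), J.card ≤ s →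
    ∀ x : Fin n → ℝ, (∀ i ∈ Pplus \ J, x i ≤ 0) →
      ∑ i ∈ J ∩ Pplus, x i + ∑ i ∈ J ∩ Pplusᶜ, |x i| ≤
        β * N (A.mulVec x) + ξ * ∑ i ∈ Jᶜ, |x i|

noncomputable def Phi {n : ℕ} (Pplus : Finset (Fin n)) (s : ℕ) (ξ θ : ℝ)
    (x : Fin n → ℝ) : ℝ :=
  normS1 s (fun i => if i ∈ Pplus then (1 + θ * ξ) * max (x i) 0 else (1 + ξ) * |x i|)

def VSGCert {m n : ℕ} (A : Matrix (Fin m) (Fin n) ℝ) (Pplus : Finset (Fin n))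
    (s : ℕ) (ξ θ ρ σ : ℝ) (N : (Fin m → ℝ) → ℝ)
    (Y : Matrix (Fin m) (Fin n) ℝ) (v : Fin m → ℝ) : Prop :=
  (∀ i, Phi Pplus s ξ θ (fun j => -((1 - Y.transpose * A : Matrix (Fin n) (Fin n) ℝ) j i)) + (A.transpose.mulVec v) i ≤ ξ) ∧
  (∀ i ∉ Pplus, Phi Pplus s ξ θ (fun j => (1 - Y.transpose * A : Matrix (Fin n) (Fin n) ℝ) j i) - (A.transpose.mulVec v) i ≤ ξ) ∧
  (∀ i ∈ Pplus, Phi Pplus s ξ θ (fun j => (1 - Y.transpose * A : Matrix (Fin n) (Fin n) ℝ) j i) - (A.transpose.mulVec v) i ≤ θ * ξ) ∧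
  (∀ i, dualNorm N (fun k => Y k i) ≤ σ) ∧
  dualNorm N v ≤ ρ

def VSG {m n : ℕ} (A : Matrix (Fin m) (Fin n) ℝ) (Pplus : Finset (Fin n))
    (s : ℕ) (ξ θ ρ σ : ℝ) (N : (Fin m → ℝ) → ℝ) : Prop :=
  ∃ (Y : Matrix (Fin m) (Fin n) ℝ) (v : Fin m → ℝ), VSGCert A Pplus s ξ θ ρ σ N Y v

def VSGbarCert {m n : ℕ} (A : Matrix (Fin m) (Fin n) ℝ) (Pplus : Finset (Fin n))
    (s : ℕ) (ξ σ θ : ℝ) (N : (Fin m → ℝ) → ℝ) (Y : Matrix (Fin m) (Fin n) ℝ) : Prop :=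
  (∀ i, dualNorm N (fun k => Y k i) ≤ σ) ∧
  (∀ i ∉ Pplus, ∀ j, |(1 - Y.transpose * A : Matrix (Fin n) (Fin n) ℝ) i j| ≤ ξ / ((1 + ξ) * s)) ∧
  (∀ i ∈ Pplus, ∀ j ∉ Pplus,
    -(ξ / ((1 + ξ * θ) * s)) ≤ (1 - Y.transpose * A : Matrix (Fin n) (Fin n) ℝ) i j ∧
      (1 - Y.transpose * A : Matrix (Fin n) (Fin n) ℝ) i j ≤ ξ / ((1 + ξ * θ) * s)) ∧
  (∀ i ∈ Pplus, ∀ j ∈ Pplus,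
    -(ξ / ((1 + ξ * θ) * s)) ≤ (1 - Y.transpose * A : Matrix (Fin n) (Fin n) ℝ) i j ∧
      (1 - Y.transpose * A : Matrix (Fin n) (Fin n) ℝ) i j ≤ ξ * θ / ((1 + ξ * θ) * s))


lemma abs_eq_maxs (a : ℝ) : |a| = max a 0 + max (-a) 0 := by
  rcases le_total 0 a with h | h
  · rw [abs_of_nonneg h, max_eq_left h, max_eq_right (by linarith)]; ring
  · rw [abs_of_nonpos h, max_eq_right h, max_eq_left (by linarith)]; ring

lemma normS1_le_of_bound {n : ℕ} (s : ℕ) (v : Fin n → ℝ) (c : ℝ) (hc : 0 ≤ c)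
    (h : ∀ i, |v i| ≤ c) : normS1 s v ≤ s * c := by
  apply Finset.sup'_le
  intro J hJ
  simp only [Finset.mem_filter] at hJ
  calc ∑ i ∈ J, |v i| ≤ ∑ _i ∈ J, c := Finset.sum_le_sum fun i _ => h i
    _ = J.card * c := by rw [Finset.sum_const, nsmul_eq_mul]
    _ ≤ s * c := by
        apply mul_le_mul_of_nonneg_right _ hc
        exact_mod_cast hJ.2

lemma cast_helper (a : ℝ) (ha : 0 < a) (ξ : ℝ) (s : ℕ) : a * (ξ / (a * s)) = ξ / s := by
  rcases eq_or_ne (s : ℝ) 0 with hs | hs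
  · simp [hs]
  · field_simp

lemma nat_mul_div_le {s : ℕ} {ξ : ℝ} (hξ : 0 ≤ ξ) : (s : ℝ) * (ξ / s) ≤ ξ := by
  rcases eq_or_ne (s : ℝ) 0 with hs | hs
  · simp [hs, hξ]
  · rw [mul_comm, div_mul_cancel₀ _ hs]

lemma Phi_le_of_bounds {n : ℕ} (Pplus : Finset (Fin n)) (s : ℕ) (ξ θ c : ℝ)
    (hc : 0 ≤ c) (hξ0 : 0 ≤ ξ) (hθξ : 0 ≤ 1 + θ * ξ) (hξ' : 0 ≤ 1 + ξ)
    (y : Fin n → ℝ)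
    (h1 : ∀ i ∈ Pplus, (1 + θ * ξ) * max (y i) 0 ≤ c / s)
    (h2 : ∀ i ∉ Pplus, (1 + ξ) * |y i| ≤ c / s) :
    Phi Pplus s ξ θ y ≤ c := by
  have hcs : Phi Pplus s ξ θ y ≤ s * (c / s) := by
    apply normS1_le_of_bound
    · positivity
    · intro i
      by_cases hi : i ∈ Pplus
      · simp only [hi, if_true]
        rw [abs_of_nonneg (mul_nonneg hθξ (le_max_right _ _))]
        exact h1 i hi
      · simp only [hi, if_false]
        rw [abs_of_nonneg (mul_nonneg hξ' (abs_nonneg _))]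
        exact h2 i hi
  exact hcs.trans (nat_mul_div_le hc)

set_option maxHeartbeats 1000000 in
lemma semigood_main {m n : ℕ} (A : Matrix (Fin m) (Fin n) ℝ) (Pplus : Finset (Fin n))
    (s : ℕ) (ξ θ : ℝ) (hξ0 : 0 ≤ ξ) (hξ1 : ξ < 1) (hθ : 1 ≤ θ)
    (Y : Matrix (Fin m) (Fin n) ℝ)
    (hB1 : ∀ i ∉ Pplus, ∀ j, |(1 - Y.transpose * A : Matrix (Fin n) (Fin n) ℝ) i j| ≤ ξ / ((1 + ξ) * s))
    (hB2 : ∀ i ∈ Pplus, ∀ j ∉ Pplus,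
      -(ξ / ((1 + ξ * θ) * s)) ≤ (1 - Y.transpose * A : Matrix (Fin n) (Fin n) ℝ) i j ∧
        (1 - Y.transpose * A : Matrix (Fin n) (Fin n) ℝ) i j ≤ ξ / ((1 + ξ * θ) * s))
    (hB3 : ∀ i ∈ Pplus, ∀ j ∈ Pplus,
      -(ξ / ((1 + ξ * θ) * s)) ≤ (1 - Y.transpose * A : Matrix (Fin n) (Fin n) ℝ) i j ∧
        (1 - Y.transpose * A : Matrix (Fin n) (Fin n) ℝ) i j ≤ ξ * θ / ((1 + ξ * θ) * s)) :
    SemiGood A Pplus s := by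
  have hθ0 : (0:ℝ) ≤ θ := le_trans zero_le_one hθ
  have hξθpos : (0:ℝ) < 1 + ξ * θ := by nlinarith
  have hξpos : (0:ℝ) < 1 + ξ := by linarith
  set B : Matrix (Fin n) (Fin n) ℝ := 1 - Y.transpose * A with hBdef
  set α : ℝ := ξ / ((1 + ξ) * s) with hαdef
  set β : ℝ := ξ / ((1 + ξ * θ) * s) with hβdef
  have hα0 : 0 ≤ α := div_nonneg hξ0 (mul_nonneg hξpos.le (Nat.cast_nonneg s))
  have hβ0 : 0 ≤ β := div_nonneg hξ0 (mul_nonneg hξθpos.le (Nat.cast_nonneg s))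
  intro w hwcard hwpos z hAz hzpos hl1
  set x : Fin n → ℝ := fun i => z i - w i with hxdef
  set J : Finset (Fin n) := Finset.univ.filter (fun i => w i ≠ 0) with hJdef
  have hwJ : ∀ i, i ∉ J → w i = 0 := by
    intro i hi
    by_contra h
    exact hi (by simp [hJdef, h])
  have hxpos : ∀ i ∈ Pplus, i ∉ J → 0 ≤ x i := by
    intro i hi hiJ
    have h1 := hzpos i hi
    have h2 := hwJ i hiJ
    simp only [hxdef, h2, sub_zero]
    exact h1
  have hAx : A.mulVec x = 0 := by
    have hx : x = z - w := rfl
    rw [hx, Matrix.mulVec_sub, hAz, sub_self]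
  have hBx : ∀ i, x i = ∑ j, B i j * x j := by
    intro i
    have h1 : B.mulVec x = x := by
      rw [hBdef, Matrix.sub_mulVec, Matrix.one_mulVec, ← Matrix.mulVec_mulVec, hAx,
        Matrix.mulVec_zero, sub_zero]
    have h2 := congrFun h1 i
    rw [← h2]
    simp [Matrix.mulVec, dotProduct]
  set P : ℝ := ∑ j ∈ Pplus, max (x j) 0 with hPdef
  set M : ℝ := ∑ j ∈ Pplus, max (-(x j)) 0 with hMdef
  set Q : ℝ := ∑ j ∈ Pplusᶜ, |x j| with hQdef
  have hP0 : 0 ≤ P := Finset.sum_nonneg fun j _ => le_max_right _ _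
  have hM0 : 0 ≤ M := Finset.sum_nonneg fun j _ => le_max_right _ _
  have hQ0 : 0 ≤ Q := Finset.sum_nonneg fun j _ => abs_nonneg _
  have hsum : ∑ j, |x j| = P + M + Q := by
    rw [← Finset.sum_add_sum_compl Pplus]
    have h1 : ∑ j ∈ Pplus, |x j| = P + M := by
      rw [hPdef, hMdef, ← Finset.sum_add_distrib]
      exact Finset.sum_congr rfl fun j _ => abs_eq_maxs (x j)
    rw [h1, hQdef]
  have hPMQ : 0 ≤ P + θ * M + Q := by nlinarith
  have hPMQ' : P + M + Q ≤ P + θ * M + Q := by nlinarith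
  -- row bound 1
  have hrow1 : ∀ i ∉ Pplus, |x i| ≤ α * (P + M + Q) := by
    intro i hi
    rw [hBx i]
    calc |∑ j, B i j * x j| ≤ ∑ j, |B i j * x j| := Finset.abs_sum_le_sum_abs _ _
      _ ≤ ∑ j, α * |x j| := by
          apply Finset.sum_le_sum
          intro j _
          rw [abs_mul]
          exact mul_le_mul_of_nonneg_right (hB1 i hi j) (abs_nonneg _)
      _ = α * (P + M + Q) := by rw [← Finset.mul_sum, hsum]
  -- row bound 2
  have hrow2 : ∀ i ∈ Pplus, -(x i) ≤ β * (P + θ * M + Q) := by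
    intro i hi
    have hx : -(x i) = ∑ j ∈ Pplus, -(B i j) * x j + ∑ j ∈ Pplusᶜ, -(B i j) * x j := by
      rw [Finset.sum_add_sum_compl Pplus (fun j => -(B i j) * x j)]
      simp only [neg_mul, Finset.sum_neg_distrib]
      rw [← hBx i]
    have h1 : ∑ j ∈ Pplus, -(B i j) * x j ≤ β * P + β * θ * M := by
      calc ∑ j ∈ Pplus, -(B i j) * x j
          ≤ ∑ j ∈ Pplus, (β * max (x j) 0 + β * θ * max (-(x j)) 0) := by
            apply Finset.sum_le_sum
            intro j hj
            obtain ⟨hlo, hhi⟩ := hB3 i hi j hj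
            rcases le_total 0 (x j) with hxj | hxj
            · rw [max_eq_left hxj, max_eq_right (neg_nonpos.mpr hxj)]
              have h := mul_le_mul_of_nonneg_right (show -(B i j) ≤ β by
                rw [hβdef]; linarith) hxj
              linarith [h]
            · rw [max_eq_right hxj, max_eq_left (neg_nonneg.mpr hxj)]
              have h := mul_le_mul_of_nonneg_right hhi (neg_nonneg.mpr hxj)
              have he : ξ * θ / ((1 + ξ * θ) * ↑s) * -(x j) = β * θ * -(x j) := by
                rw [hβdef]; ring
              have h2 : -(B i j) * x j = B i j * -(x j) := by ring
              rw [he] at h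
              linarith [h]
        _ = β * P + β * θ * M := by
            rw [Finset.sum_add_distrib, ← Finset.mul_sum, ← Finset.mul_sum, hPdef, hMdef]
    have h2 : ∑ j ∈ Pplusᶜ, -(B i j) * x j ≤ β * Q := by
      calc ∑ j ∈ Pplusᶜ, -(B i j) * x j ≤ ∑ j ∈ Pplusᶜ, β * |x j| := by
            apply Finset.sum_le_sum
            intro j hj
            have hjn : j ∉ Pplus := Finset.mem_compl.mp hj
            have habs : |B i j| ≤ β := by
              rw [hβdef]
              exact abs_le.mpr ⟨(hB2 i hi j hjn).1, (hB2 i hi j hjn).2⟩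
            calc -(B i j) * x j ≤ |(-(B i j)) * x j| := le_abs_self _
              _ = |B i j| * |x j| := by rw [abs_mul, abs_neg]
              _ ≤ β * |x j| := mul_le_mul_of_nonneg_right habs (abs_nonneg _)
        _ = β * Q := by rw [← Finset.mul_sum, hQdef]
    have heq : β * P + β * θ * M + β * Q = β * (P + θ * M + Q) := by ring
    linarith
  -- key pointwise bound
  have key1 : (1 + θ * ξ) * β = ξ / s := by
    rw [hβdef]
    have h : (1 + θ * ξ) = (1 + ξ * θ) := by ring
    rw [h]
    exact cast_helper _ hξθpos ξ s
  have key2 : (1 + ξ) * α = ξ / s := by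
    rw [hαdef]
    exact cast_helper _ hξpos ξ s
  have hXbound : ∀ j ∈ J,
      (if j ∈ Pplus then (1 + θ * ξ) * max (-(x j)) 0 else (1 + ξ) * |x j|)
        ≤ ξ / s * (P + θ * M + Q) := by
    intro j _
    by_cases hj : j ∈ Pplus
    · simp only [hj, if_true]
      have h1 : max (-(x j)) 0 ≤ β * (P + θ * M + Q) :=
        max_le (hrow2 j hj) (mul_nonneg hβ0 hPMQ)
      have hθξ0 : (0:ℝ) ≤ 1 + θ * ξ := by nlinarith
      calc (1 + θ * ξ) * max (-(x j)) 0 ≤ (1 + θ * ξ) * (β * (P + θ * M + Q)) :=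
            mul_le_mul_of_nonneg_left h1 hθξ0
        _ = ξ / s * (P + θ * M + Q) := by rw [← mul_assoc, key1]
    · simp only [hj, if_false]
      have h1 : |x j| ≤ α * (P + M + Q) := hrow1 j hj
      calc (1 + ξ) * |x j| ≤ (1 + ξ) * (α * (P + M + Q)) :=
            mul_le_mul_of_nonneg_left h1 hξpos.le
        _ = ξ / s * (P + M + Q) := by rw [← mul_assoc, key2]
        _ ≤ ξ / s * (P + θ * M + Q) :=
            mul_le_mul_of_nonneg_left hPMQ' (div_nonneg hξ0 (Nat.cast_nonneg s))
  -- sums split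
  set PJ : ℝ := ∑ j ∈ Pplus ∩ J, max (x j) 0 with hPJdef
  set Pout : ℝ := ∑ j ∈ Pplus \ J, max (x j) 0 with hPoutdef
  set QJ : ℝ := ∑ j ∈ Pplusᶜ ∩ J, |x j| with hQJdef
  set Qout : ℝ := ∑ j ∈ Pplusᶜ \ J, |x j| with hQoutdef
  have hPsplit : P = PJ + Pout := by
    rw [hPdef, hPJdef, hPoutdef, Finset.sum_inter_add_sum_sdiff]
  have hQsplit : Q = QJ + Qout := by
    rw [hQdef, hQJdef, hQoutdef, Finset.sum_inter_add_sum_sdiff]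
  have hPJ0 : 0 ≤ PJ := Finset.sum_nonneg fun j _ => le_max_right _ _
  have hPout0 : 0 ≤ Pout := Finset.sum_nonneg fun j _ => le_max_right _ _
  have hQJ0 : 0 ≤ QJ := Finset.sum_nonneg fun j _ => abs_nonneg _
  have hQout0 : 0 ≤ Qout := Finset.sum_nonneg fun j _ => abs_nonneg _
  have hMJ : ∑ j ∈ Pplus ∩ J, max (-(x j)) 0 = M := by
    rw [hMdef]
    apply Finset.sum_subset
    · intro j hj
      exact (Finset.mem_inter.mp hj).1
    · intro j hj hj'
      have hjJ : j ∉ J := fun h => hj' (Finset.mem_inter.mpr ⟨hj, h⟩)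
      have hx0 : 0 ≤ x j := hxpos j hj hjJ
      rw [max_eq_right (neg_nonpos.mpr hx0)]
  -- star inequality
  have hstar : (1 + ξ) * QJ + (1 + θ * ξ) * M ≤ ξ * (P + θ * M + Q) := by
    have hsplit : ∑ j ∈ J,
        (if j ∈ Pplus then (1 + θ * ξ) * max (-(x j)) 0 else (1 + ξ) * |x j|)
        = (1 + θ * ξ) * M + (1 + ξ) * QJ := by
      rw [← Finset.sum_inter_add_sum_sdiff J Pplus]
      have e1 : ∑ j ∈ J ∩ Pplus,
          (if j ∈ Pplus then (1 + θ * ξ) * max (-(x j)) 0 else (1 + ξ) * |x j|)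
          = (1 + θ * ξ) * M := by
        rw [← hMJ, Finset.mul_sum, Finset.inter_comm]
        apply Finset.sum_congr rfl
        intro j hj
        rw [if_pos (Finset.mem_inter.mp hj).1]
      have e2 : ∑ j ∈ J \ Pplus,
          (if j ∈ Pplus then (1 + θ * ξ) * max (-(x j)) 0 else (1 + ξ) * |x j|)
          = (1 + ξ) * QJ := by
        rw [hQJdef, Finset.mul_sum]
        have hset : J \ Pplus = Pplusᶜ ∩ J := by
          ext j; simp [Finset.mem_sdiff, Finset.mem_inter, and_comm]
        rw [hset]
        apply Finset.sum_congr rfl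
        intro j hj
        rw [if_neg (Finset.mem_compl.mp (Finset.mem_inter.mp hj).1)]
      rw [e1, e2]
    have hle : ∑ j ∈ J,
        (if j ∈ Pplus then (1 + θ * ξ) * max (-(x j)) 0 else (1 + ξ) * |x j|)
        ≤ ξ * (P + θ * M + Q) := by
      calc ∑ j ∈ J, (if j ∈ Pplus then (1 + θ * ξ) * max (-(x j)) 0 else (1 + ξ) * |x j|)
          ≤ ∑ _j ∈ J, ξ / s * (P + θ * M + Q) := Finset.sum_le_sum hXbound
        _ = J.card * (ξ / s * (P + θ * M + Q)) := by rw [Finset.sum_const, nsmul_eq_mul]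
        _ ≤ s * (ξ / s * (P + θ * M + Q)) := by
            apply mul_le_mul_of_nonneg_right _
              (mul_nonneg (div_nonneg hξ0 (Nat.cast_nonneg s)) hPMQ)
            exact_mod_cast hwcard
        _ ≤ ξ * (P + θ * M + Q) := by
            rw [← mul_assoc]
            exact mul_le_mul_of_nonneg_right (nat_mul_div_le hξ0) hPMQ
    linarith [hsplit ▸ hle]
  -- ell-1 inequality
  have hl1' : PJ - M + Pout + Qout ≤ QJ := by
    have hz_split : ∑ i, |z i| = ∑ i ∈ J, |z i| + ∑ i ∈ Jᶜ, |z i| :=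
      (Finset.sum_add_sum_compl J _).symm
    have hw_split : ∑ i, |w i| = ∑ i ∈ J, |w i| := by
      rw [← Finset.sum_add_sum_compl J (fun i => |w i|)]
      have : ∑ i ∈ Jᶜ, |w i| = 0 := by
        apply Finset.sum_eq_zero
        intro i hi
        rw [hwJ i (Finset.mem_compl.mp hi), abs_zero]
      rw [this, add_zero]
    have hzc : ∑ i ∈ Jᶜ, |z i| = ∑ i ∈ Jᶜ, |x i| := by
      apply Finset.sum_congr rfl
      intro i hi
      rw [hxdef]
      simp only []
      rw [hwJ i (Finset.mem_compl.mp hi), sub_zero]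
    have hJ_split : ∀ f : Fin n → ℝ, ∑ i ∈ J, f i = ∑ i ∈ J ∩ Pplus, f i + ∑ i ∈ J \ Pplus, f i :=
      fun f => (Finset.sum_inter_add_sum_sdiff J Pplus f).symm
    have hzJP : ∑ i ∈ J ∩ Pplus, |z i| = ∑ i ∈ J ∩ Pplus, (|w i| + x i) := by
      apply Finset.sum_congr rfl
      intro i hi
      have hiP := (Finset.mem_inter.mp hi).2
      have h1 := hzpos i hiP
      have h2 := hwpos i hiP
      rw [abs_of_nonneg h1, abs_of_nonneg h2, hxdef]
      ring
    have hzJN : ∀ i ∈ J \ Pplus, |w i| - |x i| ≤ |z i| := by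
      intro i _
      have h := abs_sub_abs_le_abs_sub (w i) (z i)
      have h2 : |w i - z i| = |x i| := by
        rw [hxdef, abs_sub_comm]
      linarith [h, h2.le, h2.ge]
    -- combine
    have hcomb : ∑ i ∈ J ∩ Pplus, x i + ∑ i ∈ Jᶜ, |x i| ≤ ∑ i ∈ J \ Pplus, |x i| := by
      have h1 : ∑ i ∈ J, |z i| ≥ ∑ i ∈ J ∩ Pplus, (|w i| + x i) + ∑ i ∈ J \ Pplus, (|w i| - |x i|) := by
        rw [hJ_split (fun i => |z i|), hzJP]
        have := Finset.sum_le_sum hzJN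
        linarith
      have h2 : ∑ i ∈ J, |w i| = ∑ i ∈ J ∩ Pplus, |w i| + ∑ i ∈ J \ Pplus, |w i| := hJ_split _
      rw [hz_split, hw_split, hzc] at hl1
      have e3 : ∑ i ∈ J ∩ Pplus, (|w i| + x i)
          = ∑ i ∈ J ∩ Pplus, |w i| + ∑ i ∈ J ∩ Pplus, x i := Finset.sum_add_distrib
      have e4 : ∑ i ∈ J \ Pplus, (|w i| - |x i|)
          = ∑ i ∈ J \ Pplus, |w i| - ∑ i ∈ J \ Pplus, |x i| := Finset.sum_sub_distrib _ _
      linarith [e3, e4]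
    -- rewrite pieces
    have hxJP : ∑ i ∈ J ∩ Pplus, x i = PJ - M := by
      rw [hPJdef, ← hMJ, Finset.inter_comm J Pplus, ← Finset.sum_sub_distrib]
      apply Finset.sum_congr rfl
      intro i _
      rcases le_total 0 (x i) with h | h
      · rw [max_eq_left h, max_eq_right (neg_nonpos.mpr h)]; ring
      · rw [max_eq_right h, max_eq_left (neg_nonneg.mpr h)]; ring
    have hJc : ∑ i ∈ Jᶜ, |x i| = Pout + Qout := by
      rw [← Finset.sum_inter_add_sum_sdiff Jᶜ Pplus (fun i => |x i|)]
      have hs1 : Jᶜ ∩ Pplus = Pplus \ J := by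
        ext j; simp [Finset.mem_sdiff, Finset.mem_inter, and_comm]
      have hs2 : Jᶜ \ Pplus = Pplusᶜ \ J := by
        ext j; simp [Finset.mem_sdiff, and_comm]
      rw [hs1, hs2]
      have e1 : ∑ i ∈ Pplus \ J, |x i| = Pout := by
        rw [hPoutdef]
        apply Finset.sum_congr rfl
        intro i hi
        have hm := Finset.mem_sdiff.mp hi
        have hx0 : 0 ≤ x i := hxpos i hm.1 hm.2
        rw [abs_of_nonneg hx0, max_eq_left hx0]
      rw [e1, hQoutdef]
    have hQJ' : ∑ i ∈ J \ Pplus, |x i| = QJ := by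
      rw [hQJdef]
      apply Finset.sum_congr _ (fun _ _ => rfl)
      ext j; simp [Finset.mem_sdiff, and_comm]
    rw [hxJP, hJc, hQJ'] at hcomb
    linarith
  -- final contradiction chain
  have hG1 : QJ + M ≤ ξ * (PJ + Pout + Qout) := by
    rw [hPsplit, hQsplit] at hstar
    linarith [hstar]
  have hG2 : PJ + Pout + Qout ≤ ξ * (PJ + Pout + Qout) := by linarith
  have hG3 : PJ + Pout + Qout ≤ 0 := by nlinarith [hG2, hξ1]
  have hPJz : PJ = 0 := le_antisymm (by linarith) hPJ0
  have hPoutz : Pout = 0 := le_antisymm (by linarith) hPout0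
  have hQoutz : Qout = 0 := le_antisymm (by linarith) hQout0
  have hQM : QJ + M ≤ 0 := by
    rw [hPJz, hPoutz, hQoutz] at hG1
    simpa using hG1
  have hQJz : QJ = 0 := le_antisymm (by linarith) hQJ0
  have hMz : M = 0 := le_antisymm (by linarith) hM0
  have hPz : P = 0 := by rw [hPsplit, hPJz, hPoutz, add_zero]
  have hQz : Q = 0 := by rw [hQsplit, hQJz, hQoutz, add_zero]
  have hx0 : ∀ j, x j = 0 := by
    intro j
    by_cases hj : j ∈ Pplus
    · have h1 : max (x j) 0 ≤ P :=
        Finset.single_le_sum (fun i _ => le_max_right (x i) 0) hj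
      have h2 : max (-(x j)) 0 ≤ M :=
        Finset.single_le_sum (fun i _ => le_max_right (-(x i)) 0) hj
      have h3 : |x j| = max (x j) 0 + max (-(x j)) 0 := abs_eq_maxs _
      have h4 : |x j| ≤ 0 := by
        rw [h3]
        have := le_max_right (x j) 0
        have := le_max_right (-(x j)) 0
        linarith [hPz ▸ h1, hMz ▸ h2]
      exact abs_eq_zero.mp (le_antisymm h4 (abs_nonneg _))
    · have h1 : |x j| ≤ Q :=
        Finset.single_le_sum (fun i _ => abs_nonneg (x i)) (Finset.mem_compl.mpr hj)
      exact abs_eq_zero.mp (le_antisymm (hQz ▸ h1) (abs_nonneg _))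
  funext i
  have := hx0 i
  simp only [hxdef] at this
  linarith

set_option maxHeartbeats 1000000 in
theorem stmt18 {m n : ℕ} (A : Matrix (Fin m) (Fin n) ℝ) (Pplus : Finset (Fin n))
    (s : ℕ) (ξ σ θ : ℝ) (hξ0 : 0 ≤ ξ) (hξ1 : ξ < 1) (hσ : 0 ≤ σ) (hθ : 1 ≤ θ)
    (N : (Fin m → ℝ) → ℝ) (hN : IsNorm N)
    (Y : Matrix (Fin m) (Fin n) ℝ) (hY : VSGbarCert A Pplus s ξ σ θ N Y) :
    (∀ i, Phi Pplus s ξ θ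
      (fun j => -((1 - Y.transpose * A : Matrix (Fin n) (Fin n) ℝ) j i)) ≤ ξ) ∧
    (∀ i ∉ Pplus, Phi Pplus s ξ θ
      (fun j => (1 - Y.transpose * A : Matrix (Fin n) (Fin n) ℝ) j i) ≤ ξ) ∧
    (∀ i ∈ Pplus, Phi Pplus s ξ θ
      (fun j => (1 - Y.transpose * A : Matrix (Fin n) (Fin n) ℝ) j i) ≤ θ * ξ) ∧
    (∀ i, dualNorm N (fun k => Y k i) ≤ σ) ∧
    SemiGood A Pplus s := by
  obtain ⟨hdual, hB1c, hB2c, hB3c⟩ := hY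
  have hθ0 : (0:ℝ) ≤ θ := le_trans zero_le_one hθ
  have hξθpos : (0:ℝ) < 1 + ξ * θ := by nlinarith
  have hξpos : (0:ℝ) < 1 + ξ := by linarith
  have hθξ0 : (0:ℝ) ≤ 1 + θ * ξ := by nlinarith
  have key1 : (1 + θ * ξ) * (ξ / ((1 + ξ * θ) * s)) = ξ / s := by
    have h : (1 + θ * ξ) = (1 + ξ * θ) := by ring
    rw [h]
    exact cast_helper _ hξθpos ξ s
  have key2 : (1 + ξ) * (ξ / ((1 + ξ) * s)) = ξ / s := cast_helper _ hξpos ξ s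
  have key3 : (1 + θ * ξ) * (ξ * θ / ((1 + ξ * θ) * s)) = θ * ξ / s := by
    have hpos2 : (0:ℝ) < 1 + θ * ξ := by nlinarith
    have h2 : ξ * θ = θ * ξ := mul_comm _ _
    rw [h2]
    exact cast_helper _ hpos2 (θ * ξ) s
  refine ⟨?_, ?_, ?_, hdual, ?_⟩
  · -- Phi of -C_i ≤ ξ
    intro i
    apply Phi_le_of_bounds Pplus s ξ θ ξ hξ0 hξ0 hθξ0 hξpos.le
    · intro j hj
      have hlo : -(ξ / ((1 + ξ * θ) * s)) ≤ (1 - Y.transpose * A : Matrix (Fin n) (Fin n) ℝ) j i := by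
        by_cases hi : i ∈ Pplus
        · exact (hB3c j hj i hi).1
        · exact (hB2c j hj i hi).1
      have hmax : max (-((1 - Y.transpose * A : Matrix (Fin n) (Fin n) ℝ) j i)) 0
          ≤ ξ / ((1 + ξ * θ) * s) := by
        apply max_le (by linarith)
        exact div_nonneg hξ0 (mul_nonneg hξθpos.le (Nat.cast_nonneg s))
      calc (1 + θ * ξ) * max (-((1 - Y.transpose * A : Matrix (Fin n) (Fin n) ℝ) j i)) 0
          ≤ (1 + θ * ξ) * (ξ / ((1 + ξ * θ) * s)) := mul_le_mul_of_nonneg_left hmax hθξ0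
        _ = ξ / s := key1
    · intro j hj
      have h := hB1c j hj i
      calc (1 + ξ) * |-((1 - Y.transpose * A : Matrix (Fin n) (Fin n) ℝ) j i)|
          = (1 + ξ) * |(1 - Y.transpose * A : Matrix (Fin n) (Fin n) ℝ) j i| := by rw [abs_neg]
        _ ≤ (1 + ξ) * (ξ / ((1 + ξ) * s)) := mul_le_mul_of_nonneg_left h hξpos.le
        _ = ξ / s := key2
  · -- Phi of C_i ≤ ξ for i ∉ Pplus
    intro i hi
    apply Phi_le_of_bounds Pplus s ξ θ ξ hξ0 hξ0 hθξ0 hξpos.le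
    · intro j hj
      have hhi := (hB2c j hj i hi).2
      have hmax : max ((1 - Y.transpose * A : Matrix (Fin n) (Fin n) ℝ) j i) 0
          ≤ ξ / ((1 + ξ * θ) * s) :=
        max_le hhi (div_nonneg hξ0 (mul_nonneg hξθpos.le (Nat.cast_nonneg s)))
      calc (1 + θ * ξ) * max ((1 - Y.transpose * A : Matrix (Fin n) (Fin n) ℝ) j i) 0
          ≤ (1 + θ * ξ) * (ξ / ((1 + ξ * θ) * s)) := mul_le_mul_of_nonneg_left hmax hθξ0
        _ = ξ / s := key1
    · intro j hj
      have h := hB1c j hj i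
      calc (1 + ξ) * |(1 - Y.transpose * A : Matrix (Fin n) (Fin n) ℝ) j i|
          ≤ (1 + ξ) * (ξ / ((1 + ξ) * s)) := mul_le_mul_of_nonneg_left h hξpos.le
        _ = ξ / s := key2
  · -- Phi of C_i ≤ θξ for i ∈ Pplus
    intro i hi
    apply Phi_le_of_bounds Pplus s ξ θ (θ * ξ) (mul_nonneg hθ0 hξ0) hξ0 hθξ0 hξpos.le
    · intro j hj
      have hhi := (hB3c j hj i hi).2
      have hmax : max ((1 - Y.transpose * A : Matrix (Fin n) (Fin n) ℝ) j i) 0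
          ≤ ξ * θ / ((1 + ξ * θ) * s) :=
        max_le hhi (div_nonneg (mul_nonneg hξ0 hθ0) (mul_nonneg hξθpos.le (Nat.cast_nonneg s)))
      calc (1 + θ * ξ) * max ((1 - Y.transpose * A : Matrix (Fin n) (Fin n) ℝ) j i) 0
          ≤ (1 + θ * ξ) * (ξ * θ / ((1 + ξ * θ) * s)) := mul_le_mul_of_nonneg_left hmax hθξ0
        _ = θ * ξ / s := key3
    · intro j hj
      have h := hB1c j hj i
      have hq : ξ / (s:ℝ) ≤ θ * ξ / s := by
        rcases eq_or_ne (s:ℝ) 0 with h | h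
        · simp [h]
        · have hs : (0:ℝ) < s := lt_of_le_of_ne (Nat.cast_nonneg s) (Ne.symm h)
          exact (div_le_div_iff_of_pos_right hs).mpr (by nlinarith)
      calc (1 + ξ) * |(1 - Y.transpose * A : Matrix (Fin n) (Fin n) ℝ) j i|
          ≤ (1 + ξ) * (ξ / ((1 + ξ) * s)) := mul_le_mul_of_nonneg_left h hξpos.le
        _ = ξ / s := key2
        _ ≤ θ * ξ / s := hq
  · -- SemiGood
    exact semigood_main A Pplus s ξ θ hξ0 hξ1 hθ Y hB1c hB2c hB3c
end

section
/- Let A be an m×n real matrix and s a positive integer. Suppose there exist a subset I of {1,…,n} with Card(I) ≤ s, signs ε_i ∈ {−1, 1} for i ∈ I ∩ P_n, and a vector x ∈ ℝ^n such that Ax = 0, x_i ≤ 0 for all i ∈ P_+ ∖ I, Σ_{i∉I} |x_i| ≤ 1, and Σ_{i∈I∩P_+} x_i + Σ_{i∈I∩P_n} ε_i·x_i ≥ 1. Then A is not s-semigood. -/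
open Finset

theorem stmt19 {m n : ℕ} (A : Matrix (Fin m) (Fin n) ℝ) (Pplus : Finset (Fin n))
    (s : ℕ) (hs : 0 < s)
    (I : Finset (Fin n)) (hI : I.card ≤ s)
    (ε : Fin n → ℝ) (hε : ∀ i ∈ I ∩ Pplusᶜ, ε i = 1 ∨ ε i = -1)
    (x : Fin n → ℝ) (hker : A.mulVec x = 0)
    (hsign : ∀ i ∈ Pplus \ I, x i ≤ 0)
    (htail : ∑ i ∈ Iᶜ, |x i| ≤ 1)
    (hbig : 1 ≤ ∑ i ∈ I ∩ Pplus, x i + ∑ i ∈ I ∩ Pplusᶜ, ε i * x i) :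
    ¬ SemiGood A Pplus s := by
  intro hSG
  classical
  set w : Fin n → ℝ := fun i => if i ∈ I then (if i ∈ Pplus then max (x i) 0
      else if 0 ≤ ε i * x i then x i else 0) else 0 with hw
  have hxne : ∃ i, x i ≠ 0 := by
    by_contra h
    push_neg at h
    simp only [h, mul_zero, Finset.sum_const_zero] at hbig
    linarith
  have hsupp : (Finset.univ.filter (fun i => w i ≠ 0)).card ≤ s := by
    refine le_trans (Finset.card_le_card ?_) hI
    intro i hi
    simp only [Finset.mem_filter] at hi
    by_contra hiI
    simp [hw, hiI] at hi
  have hwpos : ∀ i ∈ Pplus, 0 ≤ w i := by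
    intro i hi
    by_cases hiI : i ∈ I <;> simp [hw, hiI, hi, le_max_right]
  have hAz : A.mulVec (fun i => w i - x i) = A.mulVec w := by
    have h1 : (fun i => w i - x i) = w - x := rfl
    rw [h1, A.mulVec_sub, hker]
    simp
  have hzpos : ∀ i ∈ Pplus, 0 ≤ w i - x i := by
    intro i hi
    by_cases hiI : i ∈ I
    · simp only [hw, hiI, hi, if_true, sub_nonneg]
      exact le_max_left _ _
    · have := hsign i (by simp [Finset.mem_sdiff, hi, hiI])
      simp only [hw, hiI, if_false]
      linarith
  have key : ∀ i, |w i - x i| - |w i| ≤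
      (if i ∈ I then (if i ∈ Pplus then -x i else -(ε i * x i)) else |x i|) := by
    intro i
    by_cases hiI : i ∈ I
    · by_cases hiP : i ∈ Pplus
      · simp only [hw, hiI, hiP, if_true]
        rcases le_total (x i) 0 with h | h
        · rw [max_eq_right h, zero_sub, abs_neg, abs_of_nonpos h, abs_zero]; linarith
        · rw [max_eq_left h, sub_self, abs_zero, abs_of_nonneg h]; linarith
      · have hε' := hε i (by simp [Finset.mem_inter, hiI, hiP])
        simp only [hw, hiI, hiP, if_true, if_false]
        by_cases hsgn : 0 ≤ ε i * x i
        · have hle : ε i * x i ≤ |x i| := by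
            rcases hε' with h1 | h1 <;> rw [h1]
            · rw [one_mul]; exact le_abs_self _
            · rw [neg_one_mul]; exact neg_le_abs _
          rw [if_pos hsgn, sub_self, abs_zero]
          linarith
        · push_neg at hsgn
          rw [if_neg (not_le.mpr hsgn), zero_sub, abs_neg, abs_zero, sub_zero]
          rcases hε' with h1 | h1 <;> rw [h1] at hsgn ⊢ <;>
            simp only [one_mul, neg_one_mul, neg_neg] at hsgn ⊢
          · rw [abs_of_nonpos hsgn.le]
          · rw [abs_of_nonneg (by linarith)]
    · simp [hw, hiI]
  have hsum : ∑ i, |w i - x i| ≤ ∑ i, |w i| := by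
    have h1 : ∑ i, (|w i - x i| - |w i|) ≤
        ∑ i, (if i ∈ I then (if i ∈ Pplus then -x i else -(ε i * x i)) else |x i|) :=
      Finset.sum_le_sum fun i _ => key i
    have h2 : ∑ i, (if i ∈ I then (if i ∈ Pplus then -x i else -(ε i * x i)) else |x i|)
        = (∑ i ∈ I, (if i ∈ Pplus then -x i else -(ε i * x i))) + ∑ i ∈ Iᶜ, |x i| := by
      rw [← Finset.sum_add_sum_compl I
        (fun i => if i ∈ I then (if i ∈ Pplus then -x i else -(ε i * x i)) else |x i|)]
      congr 1
      · exact Finset.sum_congr rfl fun i hi => if_pos hi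
      · exact Finset.sum_congr rfl fun i hi => if_neg (Finset.mem_compl.mp hi)
    have h3 : (∑ i ∈ I, (if i ∈ Pplus then -x i else -(ε i * x i)))
        = (∑ i ∈ I ∩ Pplus, -x i) + ∑ i ∈ I ∩ Pplusᶜ, -(ε i * x i) := by
      rw [← Finset.sum_inter_add_sum_sdiff I Pplus
        (fun i => if i ∈ Pplus then -x i else -(ε i * x i))]
      have hsd : I \ Pplus = I ∩ Pplusᶜ := by
        ext j; simp [Finset.mem_sdiff, Finset.mem_inter]
      rw [hsd]
      congr 1
      · exact Finset.sum_congr rfl fun i hi => if_pos (Finset.mem_inter.mp hi).2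
      · refine Finset.sum_congr rfl fun i hi => ?_
        have h := (Finset.mem_inter.mp hi).2
        exact if_neg (by simpa using h)
    have h4 : (∑ i ∈ I ∩ Pplus, -x i) + ∑ i ∈ I ∩ Pplusᶜ, -(ε i * x i)
        = -(∑ i ∈ I ∩ Pplus, x i + ∑ i ∈ I ∩ Pplusᶜ, ε i * x i) := by
      rw [Finset.sum_neg_distrib, Finset.sum_neg_distrib]
      linarith
    rw [h2, h3, h4] at h1
    have h5 : ∑ i, (|w i - x i| - |w i|) = (∑ i, |w i - x i|) - ∑ i, |w i| :=
      Finset.sum_sub_distrib _ _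
    linarith
  have heq := hSG w hsupp hwpos (fun i => w i - x i) hAz hzpos hsum
  obtain ⟨i, hi⟩ := hxne
  have := congrFun heq i
  simp only [sub_eq_self] at this
  exact hi this
end
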